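/- Let a ∈ ℝ, let φ : (a,∞) → ℝ be C¹ with φ'(t) > 0 for all t, and suppose Λ_λ := ∫_{λ}^{∞} dμ / √(e^{2(φ(μ) − φ(λ))} − 1) is finite for every λ ∈ (a,∞). If φ' is monotone non-decreasing on (a,∞), then λ ↦ Λ_λ is monotone non-increasing: λ₁ ≤ λ₂ implies Λ_{λ₁} ≥ Λ_{λ₂}. If φ' is monotone non-increasing, then λ ↦ Λ_λ is monotone non-decreasing. -/

import Mathlib

open Set Filter MeasureTheory
open scoped ENNReal

/-- One-dimensional change of variables for the Lebesgue integral. -/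
theorem my_lintegral_image_eq_lintegral_abs_deriv_mul {s : Set ℝ} {f f' : ℝ → ℝ}
    (hs : MeasurableSet s) (hf' : ∀ x ∈ s, HasDerivWithinAt f (f' x) s x)
    (hf : Set.InjOn f s) (g : ℝ → ℝ≥0∞) :
    ∫⁻ x in f '' s, g x = ∫⁻ x in s, ENNReal.ofReal |f' x| * g (f x) := by
  rw [MeasureTheory.lintegral_image_eq_lintegral_abs_det_fderiv_mul volume hs
    (fun x hx => (hf' x hx).hasFDerivWithinAt) hf g]
  simp only [ContinuousLinearMap.det_toSpanSingleton]

/-- The half-length `Λ_{u₀} = ∫_{u₀}^∞ dλ / √(e^{2(φ(λ)-φ(u₀))} - 1) ∈ (0,∞]`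
of the maximal interval of existence of the grim reaper through `u₀`. -/
noncomputable def Lam (φ : ℝ → ℝ) (u₀ : ℝ) : ℝ≥0∞ :=
  ∫⁻ t in Set.Ioi u₀, ENNReal.ofReal (1 / Real.sqrt (Real.exp (2 * (φ t - φ u₀)) - 1))

/-- Assume `Λ_λ < ∞` for every `λ ∈ (a,∞)`.  If `φ'` is monotone
non-decreasing on `(a,∞)`, then `λ ↦ Λ_λ` is monotone non-increasing there; if `φ'`
is monotone non-increasing, then `λ ↦ Λ_λ` is monotone non-decreasing. -/
theorem stmt_3 (a : ℝ) (φ φ' : ℝ → ℝ)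
    (hφ : ∀ t ∈ Ioi a, HasDerivAt φ (φ' t) t)
    (hφ'c : ContinuousOn φ' (Ioi a))
    (hφ'pos : ∀ t ∈ Ioi a, 0 < φ' t)
    (hfin : ∀ l ∈ Ioi a, Lam φ l < ⊤) :
    (MonotoneOn φ' (Ioi a) → AntitoneOn (Lam φ) (Ioi a)) ∧
    (AntitoneOn φ' (Ioi a) → MonotoneOn (Lam φ) (Ioi a)) := by
  have hcont : ContinuousOn φ (Ioi a) :=
    fun t ht => (hφ t ht).continuousAt.continuousWithinAt
  have hmono : StrictMonoOn φ (Ioi a) := by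
    apply strictMonoOn_of_deriv_pos (convex_Ioi a) hcont
    intro x hx
    rw [interior_Ioi] at hx
    rw [(hφ x hx).deriv]
    exact hφ'pos x hx
  -- φ is unbounded above (otherwise Λ would be infinite)
  have hunb : ∀ M : ℝ, ∃ t ∈ Ioi a, M < φ t := by
    intro M
    by_contra hcontra
    push_neg at hcontra
    set l := a + 1 with hl_def
    have hl : l ∈ Ioi a := by simp [hl_def]
    have hl1 : l + 1 ∈ Ioi a := by simp only [mem_Ioi, hl_def]; linarith
    have h1 : φ l < φ (l + 1) := hmono hl hl1 (lt_add_one l)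
    have h2 : φ (l + 1) ≤ M := hcontra _ hl1
    have hK : 0 < Real.exp (2 * (M - φ l)) - 1 := by
      nlinarith [Real.add_one_le_exp (2 * (M - φ l))]
    have hlow : ∀ t ∈ Ioi l,
        ENNReal.ofReal (1 / Real.sqrt (Real.exp (2 * (M - φ l)) - 1)) ≤
        ENNReal.ofReal (1 / Real.sqrt (Real.exp (2 * (φ t - φ l)) - 1)) := by
      intro t ht
      have hta : t ∈ Ioi a := mem_Ioi.mpr (lt_trans (mem_Ioi.mp hl) (mem_Ioi.mp ht))
      have h3 : φ l < φ t := hmono hl hta ht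
      have h4 : φ t ≤ M := hcontra t hta
      have h5 : 0 < Real.exp (2 * (φ t - φ l)) - 1 := by
        nlinarith [Real.add_one_le_exp (2 * (φ t - φ l))]
      apply ENNReal.ofReal_le_ofReal
      apply one_div_le_one_div_of_le
      · exact Real.sqrt_pos.mpr h5
      · apply Real.sqrt_le_sqrt
        have : Real.exp (2 * (φ t - φ l)) ≤ Real.exp (2 * (M - φ l)) := by
          apply Real.exp_le_exp.mpr; linarith
        linarith
    have hbig : (⊤ : ℝ≥0∞) ≤ Lam φ l := by
      have c1 : ∫⁻ _ in Ioi l,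
          ENNReal.ofReal (1 / Real.sqrt (Real.exp (2 * (M - φ l)) - 1)) ≤ Lam φ l :=
        setLIntegral_mono' measurableSet_Ioi hlow
      rw [setLIntegral_const, Real.volume_Ioi, ENNReal.mul_top] at c1
      · exact c1
      · refine (ENNReal.ofReal_pos.mpr ?_).ne'
        have := Real.sqrt_pos.mpr hK
        positivity
    exact absurd (hfin l hl) (by simpa using hbig.not_gt)
  -- image of the tail ray under φ
  have himg : ∀ l ∈ Ioi a, φ '' Ioi l = Ioi (φ l) := by
    intro l hl
    apply Subset.antisymm
    · rintro _ ⟨t, ht, rfl⟩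
      exact hmono hl (mem_Ioi.mpr (lt_trans (mem_Ioi.mp hl) (mem_Ioi.mp ht))) ht
    · intro y hy
      obtain ⟨T, hTa, hTy⟩ := hunb y
      have hlT : l < T := by
        by_contra hc
        push_neg at hc
        have := hmono.monotoneOn hTa hl hc
        have hy' : φ l < y := hy
        linarith
      have hIcc : Icc l T ⊆ Ioi a := fun x hx => lt_of_lt_of_le hl hx.1
      have hIVT := intermediate_value_Ioo hlT.le (hcont.mono hIcc)
      have : y ∈ φ '' Ioo l T := hIVT ⟨hy, hTy⟩
      exact image_mono (f := φ) Ioo_subset_Ioi_self this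
  -- membership and defining property of the inverse points
  have hmem : ∀ l ∈ Ioi a, ∀ v ∈ Ioi (0:ℝ),
      Function.invFunOn φ (Ioi a) (v + φ l) ∈ Ioi a ∧
      φ (Function.invFunOn φ (Ioi a) (v + φ l)) = v + φ l := by
    intro l hl v hv
    have h1 : v + φ l ∈ Ioi (φ l) := by
      have : (0:ℝ) < v := hv
      simp only [mem_Ioi]; linarith
    rw [← himg l hl] at h1
    have h2 : v + φ l ∈ φ '' Ioi a := image_mono (f := φ) (Ioi_subset_Ioi hl.le) h1
    obtain ⟨x, hx, hxe⟩ := h2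
    exact ⟨Function.invFunOn_mem ⟨x, hx, hxe⟩, Function.invFunOn_eq ⟨x, hx, hxe⟩⟩
  -- key representation of Lam as an integral over (0,∞)
  have hrep : ∀ l ∈ Ioi a, Lam φ l = ∫⁻ v in Ioi (0:ℝ),
      ENNReal.ofReal ((1 / φ' (Function.invFunOn φ (Ioi a) (v + φ l))) *
        (1 / Real.sqrt (Real.exp (2 * v) - 1))) := by
    intro l hl
    set g : ℝ → ℝ≥0∞ := fun u =>
      ENNReal.ofReal ((1 / φ' (Function.invFunOn φ (Ioi a) u)) *
        (1 / Real.sqrt (Real.exp (2 * (u - φ l)) - 1))) with hg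
    have hsub : Ioi l ⊆ Ioi a := Ioi_subset_Ioi hl.le
    have hinj : Set.InjOn φ (Ioi l) := (hmono.mono hsub).injOn
    have step1 : ∫⁻ u in φ '' Ioi l, g u
        = ∫⁻ t in Ioi l, ENNReal.ofReal |φ' t| * g (φ t) :=
      my_lintegral_image_eq_lintegral_abs_deriv_mul measurableSet_Ioi
        (fun t ht => ((hφ t (hsub ht)).hasDerivWithinAt)) hinj g
    have step2 : ∫⁻ t in Ioi l, ENNReal.ofReal |φ' t| * g (φ t) = Lam φ l := by
      apply setLIntegral_congr_fun measurableSet_Ioi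
      intro t ht
      have hta : t ∈ Ioi a := hsub ht
      have hInv : Function.invFunOn φ (Ioi a) (φ t) = t :=
        hmono.injOn.leftInvOn_invFunOn hta
      have hpos := hφ'pos t hta
      rw [hg]
      simp only [hInv, abs_of_pos hpos]
      rw [← ENNReal.ofReal_mul hpos.le]
      congr 1
      rw [← mul_assoc, mul_one_div, mul_one_div_cancel hpos.ne']
    have step3 : ∫⁻ u in Ioi (φ l), g u = ∫⁻ v in Ioi (0:ℝ),
        ENNReal.ofReal ((1 / φ' (Function.invFunOn φ (Ioi a) (v + φ l))) *
          (1 / Real.sqrt (Real.exp (2 * v) - 1))) := by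
      have himg0 : (fun v : ℝ => v + φ l) '' Ioi 0 = Ioi (φ l) := by
        rw [image_add_const_Ioi, zero_add]
      have hder : ∀ v ∈ Ioi (0:ℝ),
          HasDerivWithinAt (fun v : ℝ => v + φ l) ((fun _ : ℝ => (1:ℝ)) v) (Ioi 0) v :=
        fun v _ => ((hasDerivAt_id v).add_const (φ l)).hasDerivWithinAt
      have hinj0 : Set.InjOn (fun v : ℝ => v + φ l) (Ioi 0) :=
        (add_left_injective (φ l)).injOn
      rw [← himg0, my_lintegral_image_eq_lintegral_abs_deriv_mul measurableSet_Ioi hder hinj0 g]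
      apply setLIntegral_congr_fun measurableSet_Ioi
      intro v hv
      rw [hg]
      simp only [abs_one, ENNReal.ofReal_one, one_mul, add_sub_cancel_right]
    rw [← step2, ← step1, himg l hl, step3]
  -- comparison of the inverse points
  have hle : ∀ l₁ ∈ Ioi a, ∀ l₂ ∈ Ioi a, l₁ ≤ l₂ → ∀ v ∈ Ioi (0:ℝ),
      Function.invFunOn φ (Ioi a) (v + φ l₁) ≤ Function.invFunOn φ (Ioi a) (v + φ l₂) := by
    intro l₁ hl₁ l₂ hl₂ h12 v hv
    obtain ⟨m₁, e₁⟩ := hmem l₁ hl₁ v hv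
    obtain ⟨m₂, e₂⟩ := hmem l₂ hl₂ v hv
    have : φ (Function.invFunOn φ (Ioi a) (v + φ l₁)) ≤
        φ (Function.invFunOn φ (Ioi a) (v + φ l₂)) := by
      rw [e₁, e₂]
      have := hmono.monotoneOn hl₁ hl₂ h12
      linarith
    exact (hmono.le_iff_le m₁ m₂).mp this
  constructor
  · intro hM l₁ hl₁ l₂ hl₂ h12
    rw [hrep l₁ hl₁, hrep l₂ hl₂]
    apply setLIntegral_mono' measurableSet_Ioi
    intro v hv
    obtain ⟨m₁, e₁⟩ := hmem l₁ hl₁ v hv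
    obtain ⟨m₂, e₂⟩ := hmem l₂ hl₂ v hv
    apply ENNReal.ofReal_le_ofReal
    apply mul_le_mul_of_nonneg_right
    · apply one_div_le_one_div_of_le (hφ'pos _ m₁)
      exact hM m₁ m₂ (hle l₁ hl₁ l₂ hl₂ h12 v hv)
    · positivity
  · intro hA l₁ hl₁ l₂ hl₂ h12
    rw [hrep l₁ hl₁, hrep l₂ hl₂]
    apply setLIntegral_mono' measurableSet_Ioi
    intro v hv
    obtain ⟨m₁, e₁⟩ := hmem l₁ hl₁ v hv
    obtain ⟨m₂, e₂⟩ := hmem l₂ hl₂ v hv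
    apply ENNReal.ofReal_le_ofReal
    apply mul_le_mul_of_nonneg_right
    · apply one_div_le_one_div_of_le (hφ'pos _ m₂)
      exact hA m₁ m₂ (hle l₁ hl₁ l₂ hl₂ h12 v hv)
    · positivity
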